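/- arXiv:2202.12770 — 4 statements merged into one kernel-verified Lean document; each statement's English description precedes it below -/
import Mathlib

section
/- Fix T > 0, d ≥ 1, β = (β₁,…,β_d) ∈ ℝ^d with ‖β‖_∞ = max_i |β_i|, and a d×d substochastic matrix Q with zero diagonal and Qⁿ → 0, with regulator map ψ. Suppose K ∈ (0,∞) is such that ψ is K-Lipschitz with respect to the uniform metric: for all ξ, ζ ∈ ∏_{i=1}^d D[0,T], max_i sup_{t∈[0,T]} |ψ⁽ⁱ⁾(ξ)(t) − ψ⁽ⁱ⁾(ζ)(t)| ≤ K max_i sup_{t∈[0,T]} |ξ⁽ⁱ⁾(t) − ζ⁽ⁱ⁾(t)|. Let w⁽¹⁾,…,w⁽ᵈ⁾ : [0,T] → [0,T] be nondecreasing with w⁽ⁱ⁾(0)=0 and w⁽ⁱ⁾(T)=T, set ŵ(t) = max_i w⁽ⁱ⁾(t), w̌(t) = min_i w⁽ⁱ⁾(t), and ‖w − e‖_∞ = max_i sup_{t∈[0,T]} |w⁽ⁱ⁾(t) − t|. Then for every ξ with each ξ⁽ⁱ⁾ ∈ D^{β_i}[0,T], writing ξ∘w for the d-tuple with coordinates ξ⁽ⁱ⁾∘w⁽ⁱ⁾: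 (i) ψ(ξ∘w)(t) ≤ ψ(ξ)(w̌(t)) + 2K‖β‖_∞‖w − e‖_∞ componentwise for all t ∈ [0,T]; and (ii) ψ(ξ)(ŵ(t)) ≤ ψ(ξ∘w)(t) + 2K‖β‖_∞‖w − e‖_∞ componentwise for all t ∈ [0,T]. -/
open Set Filter

noncomputable section

/-- `f` is càdlàg on `[0,T]`: right-continuous on `[0,T)` and with left limits on `(0,T]`. -/
def Cadlag (T : ℝ) (f : ℝ → ℝ) : Prop :=
  (∀ t ∈ Set.Ico (0:ℝ) T, Filter.Tendsto f (nhdsWithin t (Set.Ici t)) (nhds (f t))) ∧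
  (∀ t ∈ Set.Ioc (0:ℝ) T, ∃ L : ℝ, Filter.Tendsto f (nhdsWithin t (Set.Iio t)) (nhds L))

/-- `lam` is a strictly increasing continuous bijection of `[0,T]` onto itself. -/
def IsTimeChange (T : ℝ) (lam : ℝ → ℝ) : Prop :=
  StrictMonoOn lam (Set.Icc 0 T) ∧ ContinuousOn lam (Set.Icc 0 T) ∧
  Set.MapsTo lam (Set.Icc 0 T) (Set.Icc 0 T) ∧
  Set.SurjOn lam (Set.Icc 0 T) (Set.Icc 0 T) ∧ lam 0 = 0 ∧ lam T = T

/-- Uniform distance of two (bounded) functions over `[0,T]`. -/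
def unifDist (T : ℝ) (f g : ℝ → ℝ) : ℝ :=
  sSup {r : ℝ | ∃ t ∈ Set.Icc (0:ℝ) T, r = |f t - g t|}

/-- The Skorokhod `J₁` distance on `[0,T]`. -/
def J1Dist (T : ℝ) (f g : ℝ → ℝ) : ℝ :=
  sInf {r : ℝ | ∃ lam : ℝ → ℝ, IsTimeChange T lam ∧
    r = max (unifDist T (fun t => f (lam t)) g) (unifDist T lam id)}

/-- The product `J₁` distance on `d`-tuples of paths. -/
def prodJ1Dist (T : ℝ) {d : ℕ} (ξ ζ : Fin d → ℝ → ℝ) : ℝ :=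
  ∑ i, J1Dist T (ξ i) (ζ i)

/-- A substochastic routing matrix with zero diagonal whose powers tend to zero. -/
def Substochastic {d : ℕ} (Q : Matrix (Fin d) (Fin d) ℝ) : Prop :=
  (∀ i j, 0 ≤ Q i j) ∧ (∀ i, Q i i = 0) ∧ (∀ i, ∑ j, Q i j ≤ 1) ∧
  Filter.Tendsto (fun n : ℕ => Q ^ n) Filter.atTop (nhds 0)

/-- The reflection matrix `𝒬 = I - Qᵀ`. -/
def refMatrix {d : ℕ} (Q : Matrix (Fin d) (Fin d) ℝ) : Matrix (Fin d) (Fin d) ℝ :=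
  1 - Q.transpose

/-- `ζ` belongs to the feasible regulator set `Ψ(ξ)`: each coordinate of `ζ` is a
nondecreasing càdlàg path, nonnegative at the origin, and `ξ + 𝒬 ζ ≥ 0` on `[0,T]`. -/
def Feasible (T : ℝ) {d : ℕ} (Q : Matrix (Fin d) (Fin d) ℝ)
    (ξ ζ : Fin d → ℝ → ℝ) : Prop :=
  (∀ i, Cadlag T (ζ i) ∧ MonotoneOn (ζ i) (Set.Icc 0 T) ∧ 0 ≤ ζ i 0) ∧
  (∀ t ∈ Set.Icc (0:ℝ) T, ∀ i, 0 ≤ ξ i t + ∑ j, refMatrix Q i j * ζ j t)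

/-- The regulator map `ψ`, defined coordinatewise and pointwise as the infimum of the
feasible regulator set. -/
def regulator (T : ℝ) {d : ℕ} (Q : Matrix (Fin d) (Fin d) ℝ)
    (ξ : Fin d → ℝ → ℝ) : Fin d → ℝ → ℝ :=
  fun i t => sInf {z : ℝ | ∃ ζ, Feasible T Q ξ ζ ∧ z = ζ i t}

/-- The content map `φ(ξ) = ξ + 𝒬 ψ(ξ)`. -/
def content (T : ℝ) {d : ℕ} (Q : Matrix (Fin d) (Fin d) ℝ)
    (ξ : Fin d → ℝ → ℝ) : Fin d → ℝ → ℝ :=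
  fun i t => ξ i t + ∑ j, refMatrix Q i j * regulator T Q ξ j t

/-- `D^β[0,T]`: càdlàg paths `f` with `f 0 ≥ 0` such that `t ↦ f t - β t` is nondecreasing. -/
def DBeta (T β : ℝ) (f : ℝ → ℝ) : Prop :=
  Cadlag T f ∧ 0 ≤ f 0 ∧ MonotoneOn (fun t => f t - β * t) (Set.Icc 0 T)

/-- `max_i sup_{t ∈ [0,T]} |ξ⁽ⁱ⁾(t) - ζ⁽ⁱ⁾(t)|`, the uniform distance of tuples of paths. -/
def supDistTuple (T : ℝ) {d : ℕ} (ξ ζ : Fin d → ℝ → ℝ) : ℝ :=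
  sSup {r : ℝ | ∃ i : Fin d, ∃ t ∈ Set.Icc (0:ℝ) T, r = |ξ i t - ζ i t|}

/-- `sup_{t ∈ [0,T]} |w(t) - t|`, the uniform deviation of a time deformation from identity. -/
def supTimeDev (T : ℝ) (w : ℝ → ℝ) : ℝ :=
  sSup {r : ℝ | ∃ t ∈ Set.Icc (0:ℝ) T, r = |w t - t|}
section AuxRegProof

open MeasureTheory intervalIntegral

variable {T : ℝ} {d : ℕ} {Q : Matrix (Fin d) (Fin d) ℝ}

lemma cadlag_of_continuous {f : ℝ → ℝ} (hf : Continuous f) : Cadlag T f :=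
  ⟨fun t _ => (hf.tendsto t).mono_left nhdsWithin_le_nhds,
   fun t _ => ⟨f t, (hf.tendsto t).mono_left nhdsWithin_le_nhds⟩⟩

lemma feasible_nonneg {ξ ζ : Fin d → ℝ → ℝ} (h : Feasible T Q ξ ζ)
    {t : ℝ} (ht : t ∈ Set.Icc (0:ℝ) T) (i : Fin d) : 0 ≤ ζ i t :=
  le_trans (h.1 i).2.2 ((h.1 i).2.1 ⟨le_refl 0, le_trans ht.1 ht.2⟩ ht ht.1)

lemma refMatrix_sum (Q : Matrix (Fin d) (Fin d) ℝ) (i : Fin d) (x : Fin d → ℝ) :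
    ∑ j, refMatrix Q i j * x j = x i - ∑ j, Q j i * x j := by
  simp only [refMatrix, Matrix.sub_apply, Matrix.transpose_apply, Matrix.one_apply, sub_mul,
    Finset.sum_sub_distrib, ite_mul, one_mul, zero_mul]
  rw [Finset.sum_ite_eq]
  simp

/-- The iterates `S_m = ∑_{k<m} (Qᵀ)^k 1`. -/
def Svec (Q : Matrix (Fin d) (Fin d) ℝ) : ℕ → Fin d → ℝ
  | 0 => fun _ => 0
  | (m+1) => fun i => 1 + ∑ j, Q j i * Svec Q m j

lemma Svec_nonneg (hQ : ∀ i j, 0 ≤ Q i j) : ∀ m i, 0 ≤ Svec Q m i := by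
  intro m
  induction m with
  | zero => intro i; simp [Svec]
  | succ m ih =>
    intro i
    have : 0 ≤ ∑ j, Q j i * Svec Q m j :=
      Finset.sum_nonneg fun j _ => mul_nonneg (hQ j i) (ih j)
    simp only [Svec]; linarith

lemma Svec_succ_sub (Q : Matrix (Fin d) (Fin d) ℝ) :
    ∀ m i, Svec Q (m+1) i - Svec Q m i = ∑ j, (Q ^ m) j i := by
  intro m
  induction m with
  | zero => intro i; simp [Svec, Matrix.one_apply]
  | succ m ih =>
    intro i
    have h1 : Svec Q (m+2) i - Svec Q (m+1) i
        = ∑ j, Q j i * (Svec Q (m+1) j - Svec Q m j) := by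
      simp only [Svec, mul_sub, Finset.sum_sub_distrib]; ring
    rw [h1]
    have h2 : ∀ j, Q j i * (Svec Q (m+1) j - Svec Q m j) = ∑ k, (Q ^ m) k j * Q j i := by
      intro j; rw [ih j, Finset.mul_sum]; congr 1; ext k; ring
    simp only [h2]
    rw [Finset.sum_comm]
    apply Finset.sum_congr rfl
    intro k _
    rw [pow_succ, Matrix.mul_apply]

lemma sum_refMatrix_Svec (Q : Matrix (Fin d) (Fin d) ℝ) (γ : ℝ) (m : ℕ) (i : Fin d) :
    ∑ j, refMatrix Q i j * (γ * Svec Q m j)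
      = γ * (1 - (Svec Q (m+1) i - Svec Q m i)) := by
  rw [refMatrix_sum]
  have : ∑ j, Q j i * (γ * Svec Q m j) = γ * ∑ j, Q j i * Svec Q m j := by
    rw [Finset.mul_sum]; congr 1; ext j; ring
  rw [this]
  have h : Svec Q (m+1) i = 1 + ∑ j, Q j i * Svec Q m j := rfl
  rw [h]; ring

lemma tendsto_Dvec (hQ : Filter.Tendsto (fun n : ℕ => Q ^ n) Filter.atTop (nhds 0)) (i : Fin d) :
    Filter.Tendsto (fun m => Svec Q (m+1) i - Svec Q m i) Filter.atTop (nhds 0) := by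
  simp only [Svec_succ_sub]
  have : Filter.Tendsto (fun m => ∑ j, (Q ^ m) j i) Filter.atTop (nhds (∑ j : Fin d, (0:ℝ))) := by
    apply tendsto_finset_sum
    intro j _
    have hc : Continuous fun M : Matrix (Fin d) (Fin d) ℝ => M j i :=
      Continuous.matrix_elem continuous_id j i
    have := (hc.tendsto 0).comp hQ
    simpa [Function.comp_def] using this
  simpa using this

lemma exists_Dvec_le (hQ : Filter.Tendsto (fun n : ℕ => Q ^ n) Filter.atTop (nhds 0))
    {ε : ℝ} (hε : 0 < ε) : ∃ m, ∀ i, Svec Q (m+1) i - Svec Q m i ≤ ε := by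
  have h : ∀ i : Fin d, ∀ᶠ m in Filter.atTop, Svec Q (m+1) i - Svec Q m i ≤ ε := by
    intro i
    have := (tendsto_Dvec hQ i).eventually (eventually_le_nhds hε)
    simpa using this
  exact (Filter.eventually_all.2 h).exists

end AuxRegProof
section AuxAv

open MeasureTheory intervalIntegral

/-- Sliding average of `f` over `[s-δ, s]`. -/
def Av (f : ℝ → ℝ) (δ s : ℝ) : ℝ := δ⁻¹ * ∫ u in (s-δ)..s, f u

lemma Av_mono {f : ℝ → ℝ} (hf : Monotone f) {δ : ℝ} (hδ : 0 < δ) : Monotone (Av f δ) := by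
  intro s s' hss
  unfold Av
  have hc : (0:ℝ) ≤ s' - s := by linarith
  have key : ∫ u in (s-δ)..s, f u = ∫ u in (s'-δ)..s', f (u - (s' - s)) := by
    rw [integral_comp_sub_right f (s' - s)]
    congr 1 <;> ring
  rw [key]
  apply mul_le_mul_of_nonneg_left _ (by positivity)
  apply integral_mono_on (by linarith)
  · exact (hf.comp (fun a b hab => sub_le_sub_right hab _)).intervalIntegrable
  · exact hf.intervalIntegrable
  · intro x _; exact hf (by linarith)

lemma Av_continuous {f : ℝ → ℝ} (hf : Monotone f) (δ : ℝ) : Continuous (Av f δ) := by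
  have hint : ∀ a b : ℝ, IntervalIntegrable f volume a b := fun a b => hf.intervalIntegrable
  have key : ∀ s : ℝ, Av f δ s
      = δ⁻¹ * ((∫ u in (0:ℝ)..s, f u) - ∫ u in (0:ℝ)..(s-δ), f u) := by
    intro s
    unfold Av
    rw [← integral_add_adjacent_intervals (hint 0 (s-δ)) (hint (s-δ) s)]
    ring_nf
  have hF : Continuous fun b : ℝ => ∫ u in (0:ℝ)..b, f u := continuous_primitive hint 0
  have : Continuous fun s : ℝ =>
      δ⁻¹ * ((∫ u in (0:ℝ)..s, f u) - ∫ u in (0:ℝ)..(s-δ), f u) :=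
    continuous_const.mul (hF.sub (hF.comp (continuous_id.sub continuous_const)))
  exact this.congr fun s => (key s).symm

lemma Av_le {f : ℝ → ℝ} (hf : Monotone f) {δ : ℝ} (hδ : 0 < δ) (s : ℝ) : Av f δ s ≤ f s := by
  unfold Av
  have h1 : ∫ u in (s-δ)..s, f u ≤ ∫ _u in (s-δ)..s, f s := by
    apply integral_mono_on (by linarith) hf.intervalIntegrable intervalIntegrable_const
    intro x hx; exact hf hx.2
  have h2 : ∫ _u in (s-δ)..s, f s = δ * f s := by
    rw [intervalIntegral.integral_const]; simp [smul_eq_mul, mul_comm]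
  calc δ⁻¹ * ∫ u in (s-δ)..s, f u ≤ δ⁻¹ * (δ * f s) :=
        mul_le_mul_of_nonneg_left (h2 ▸ h1) (by positivity)
    _ = f s := by field_simp

lemma le_Av {f : ℝ → ℝ} (hf : Monotone f) {δ : ℝ} (hδ : 0 < δ) (s : ℝ) : f (s - δ) ≤ Av f δ s := by
  unfold Av
  have h1 : ∫ _u in (s-δ)..s, f (s - δ) ≤ ∫ u in (s-δ)..s, f u := by
    apply integral_mono_on (by linarith) intervalIntegrable_const hf.intervalIntegrable
    intro x hx; exact hf hx.1
  have h2 : ∫ _u in (s-δ)..s, f (s-δ) = δ * f (s-δ) := by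
    rw [intervalIntegral.integral_const]; simp [smul_eq_mul, mul_comm]
  calc f (s - δ) = δ⁻¹ * (δ * f (s - δ)) := by field_simp
    _ ≤ δ⁻¹ * ∫ u in (s-δ)..s, f u :=
        mul_le_mul_of_nonneg_left (h2 ▸ h1) (by positivity)

/-- Lower bound for the average of a (not necessarily monotone) integrable function. -/
lemma le_Av_of_le {g : ℝ → ℝ} {δ s B : ℝ} (hδ : 0 < δ)
    (hint : IntervalIntegrable g volume (s-δ) s)
    (hB : ∀ u ∈ Set.Icc (s-δ) s, B ≤ g u) : B ≤ Av g δ s := by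
  unfold Av
  have h1 : ∫ _u in (s-δ)..s, B ≤ ∫ u in (s-δ)..s, g u := by
    apply integral_mono_on (by linarith) intervalIntegrable_const hint
    exact hB
  have h2 : ∫ _u in (s-δ)..s, B = δ * B := by
    rw [intervalIntegral.integral_const]; simp [smul_eq_mul, mul_comm]
  calc B = δ⁻¹ * (δ * B) := by field_simp
    _ ≤ δ⁻¹ * ∫ u in (s-δ)..s, g u :=
        mul_le_mul_of_nonneg_left (h2 ▸ h1) (by positivity)

end AuxAv
section AuxConstruct

open MeasureTheory intervalIntegral

variable {T : ℝ} {d : ℕ} {Q : Matrix (Fin d) (Fin d) ℝ}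

/-- Constant regulators built from `Svec` are feasible when the driver is bounded below. -/
lemma feasible_const_Svec (hT : 0 ≤ T) (hQpos : ∀ i j, 0 ≤ Q i j)
    {ξ : Fin d → ℝ → ℝ} {γ : ℝ} (hγ : 0 ≤ γ) {m : ℕ}
    (h : ∀ t ∈ Set.Icc (0:ℝ) T, ∀ i,
      0 ≤ ξ i t + γ * (1 - (Svec Q (m+1) i - Svec Q m i))) :
    Feasible T Q ξ (fun j _ => γ * Svec Q m j) := by
  constructor
  · intro i
    exact ⟨cadlag_of_continuous continuous_const, monotoneOn_const,
      mul_nonneg hγ (Svec_nonneg hQpos m i)⟩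
  · intro t ht i
    rw [sum_refMatrix_Svec]
    exact h t ht i

lemma regulator_bddBelow (ξ : Fin d → ℝ → ℝ) (i : Fin d) {t : ℝ} (ht : t ∈ Set.Icc (0:ℝ) T) :
    BddBelow {z : ℝ | ∃ ζ, Feasible T Q ξ ζ ∧ z = ζ i t} := by
  refine ⟨0, fun z hz => ?_⟩
  obtain ⟨ζ, hζ, rfl⟩ := hz
  exact feasible_nonneg hζ ht i

lemma regulator_le {ξ ζ : Fin d → ℝ → ℝ} (hζ : Feasible T Q ξ ζ) (i : Fin d)
    {t : ℝ} (ht : t ∈ Set.Icc (0:ℝ) T) : regulator T Q ξ i t ≤ ζ i t :=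
  csInf_le (regulator_bddBelow ξ i ht) ⟨ζ, hζ, rfl⟩

lemma le_regulator {ξ : Fin d → ℝ → ℝ} (hne : ∃ ζ, Feasible T Q ξ ζ) {B : ℝ} (i : Fin d) (t : ℝ)
    (hB : ∀ ζ, Feasible T Q ξ ζ → B ≤ ζ i t) : B ≤ regulator T Q ξ i t := by
  obtain ⟨ζ0, hζ0⟩ := hne
  exact le_csInf ⟨ζ0 i t, ζ0, hζ0, rfl⟩ (by rintro z ⟨ζ, hζ, rfl⟩; exact hB ζ hζ)

lemma regulator_nonneg (ξ : Fin d → ℝ → ℝ) (i : Fin d) {t : ℝ} (ht : t ∈ Set.Icc (0:ℝ) T) :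
    0 ≤ regulator T Q ξ i t := by
  apply Real.sInf_nonneg
  rintro z ⟨ζ, hζ, rfl⟩
  exact feasible_nonneg hζ ht i

/-- The main construction: mollified time-changed regulators plus a constant are feasible. -/
lemma construct_feasible (hT : 0 ≤ T)
    {ξsrc ξtgt ζ : Fin d → ℝ → ℝ} (hζ : Feasible T Q ξsrc ζ)
    {θ : ℝ → ℝ} (hθ : Monotone θ) (hθmem : ∀ u, θ u ∈ Set.Icc (0:ℝ) T)
    {δ : ℝ} (hδ : 0 < δ) {C : ℝ}
    (hest : ∀ s ∈ Set.Icc (0:ℝ) T, ∀ u ∈ Set.Icc (s-δ) s, ∀ j,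
      ξsrc j (θ u) ≤ ξtgt j s + C)
    {c : Fin d → ℝ} (hc0 : ∀ j, 0 ≤ c j)
    (hc : ∀ j, C ≤ ∑ k, refMatrix Q j k * c k) :
    Feasible T Q ξtgt (fun j s => Av (fun u => ζ j (θ u)) δ s + c j) := by
  have hfmono : ∀ j, Monotone (fun u => ζ j (θ u)) := by
    intro j u v huv
    exact (hζ.1 j).2.1 (hθmem u) (hθmem v) (hθ huv)
  constructor
  · intro j
    refine ⟨cadlag_of_continuous ((Av_continuous (hfmono j) δ).add continuous_const),
      ((Av_mono (hfmono j) hδ).add_const (c j)).monotoneOn _, ?_⟩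
    have h1 : ζ j (θ (0 - δ)) ≤ Av (fun u => ζ j (θ u)) δ 0 := le_Av (hfmono j) hδ 0
    have h2 : 0 ≤ ζ j (θ (0 - δ)) := feasible_nonneg hζ (hθmem _) j
    have := hc0 j
    dsimp only
    linarith
  · intro s hs j
    have hint : ∀ k : Fin d, IntervalIntegrable (fun u => ζ k (θ u)) MeasureTheory.volume (s-δ) s :=
      fun k => (hfmono k).intervalIntegrable
    have hGint : IntervalIntegrable (fun u => ∑ k, refMatrix Q j k * ζ k (θ u))
        MeasureTheory.volume (s-δ) s := by
      have h := IntervalIntegrable.sum (μ := MeasureTheory.volume) (a := s-δ) (b := s)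
        Finset.univ (f := fun k (u:ℝ) => refMatrix Q j k * ζ k (θ u))
        (fun k _ => (hint k).const_mul _)
      have he : (∑ k : Fin d, fun (u:ℝ) => refMatrix Q j k * ζ k (θ u))
          = fun u => ∑ k, refMatrix Q j k * ζ k (θ u) := by
        funext u; simp [Finset.sum_apply]
      rwa [he] at h
    have hsum : ∑ k, refMatrix Q j k * Av (fun u => ζ k (θ u)) δ s
        = Av (fun u => ∑ k, refMatrix Q j k * ζ k (θ u)) δ s := by
      unfold Av
      rw [integral_finset_sum (fun k _ => (hint k).const_mul _)]
      rw [Finset.mul_sum]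
      apply Finset.sum_congr rfl
      intro k _
      rw [intervalIntegral.integral_const_mul]
      ring
    have hGlb : ∀ u ∈ Set.Icc (s-δ) s,
        -(ξtgt j s + C) ≤ ∑ k, refMatrix Q j k * ζ k (θ u) := by
      intro u hu
      have hfeas := hζ.2 (θ u) (hθmem u) j
      have hest' := hest s hs u hu j
      linarith
    have hAvG : -(ξtgt j s + C) ≤ Av (fun u => ∑ k, refMatrix Q j k * ζ k (θ u)) δ s :=
      le_Av_of_le hδ hGint hGlb
    have hsplit : ∑ k, refMatrix Q j k * (Av (fun u => ζ k (θ u)) δ s + c k)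
        = (∑ k, refMatrix Q j k * Av (fun u => ζ k (θ u)) δ s)
          + ∑ k, refMatrix Q j k * c k := by
      rw [← Finset.sum_add_distrib]
      apply Finset.sum_congr rfl
      intro k _; ring
    have hcj := hc j
    dsimp only
    rw [hsplit, hsum]
    linarith

/-- Value bound for the constructed regulator. -/
lemma construct_value_le {ξsrc ζ : Fin d → ℝ → ℝ} (hζ : Feasible T Q ξsrc ζ)
    {θ : ℝ → ℝ} (hθ : Monotone θ) (hθmem : ∀ u, θ u ∈ Set.Icc (0:ℝ) T)
    {δ : ℝ} (hδ : 0 < δ) (c : Fin d → ℝ) (j : Fin d) (s : ℝ) :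
    Av (fun u => ζ j (θ u)) δ s + c j ≤ ζ j (θ s) + c j := by
  have hfmono : Monotone (fun u => ζ j (θ u)) := by
    intro u v huv
    exact (hζ.1 j).2.1 (hθmem u) (hθmem v) (hθ huv)
  exact add_le_add_left (Av_le hfmono hδ s) _

end AuxConstruct
section AuxK

variable {T : ℝ} {d : ℕ} {Q : Matrix (Fin d) (Fin d) ℝ}

lemma Svec_le_feasible (hQpos : ∀ i j, 0 ≤ Q i j) {ζ : Fin d → ℝ → ℝ}
    (hζ : Feasible T Q (fun _ _ => (-1:ℝ)) ζ) :
    ∀ m, ∀ t ∈ Set.Icc (0:ℝ) T, ∀ i, Svec Q m i ≤ ζ i t := by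
  intro m
  induction m with
  | zero => intro t ht i; simpa [Svec] using feasible_nonneg hζ ht i
  | succ m ih =>
    intro t ht i
    have hfeas := hζ.2 t ht i
    rw [refMatrix_sum] at hfeas
    dsimp only at hfeas
    have hsum : ∑ j, Q j i * Svec Q m j ≤ ∑ j, Q j i * ζ j t :=
      Finset.sum_le_sum fun j _ => mul_le_mul_of_nonneg_left (ih t ht j) (hQpos j i)
    simp only [Svec]
    linarith

lemma feasible_zero : Feasible T Q (fun _ _ => (0:ℝ)) (fun _ _ => (0:ℝ)) := by
  refine ⟨fun i => ⟨cadlag_of_continuous continuous_const, monotoneOn_const, le_refl 0⟩, ?_⟩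
  intro t ht i
  simp

lemma regulator_zero_fn (i : Fin d) {t : ℝ} (ht : t ∈ Set.Icc (0:ℝ) T) :
    regulator T Q (fun _ _ => (0:ℝ)) i t = 0 :=
  le_antisymm (regulator_le feasible_zero i ht) (regulator_nonneg _ i ht)

lemma Svec_le_K (hT : 0 < T) (hd : 0 < d) (hQ : Substochastic Q) {K : ℝ}
    (hLip : ∀ ξ ζ : Fin d → ℝ → ℝ, (∀ i, Cadlag T (ξ i)) → (∀ i, Cadlag T (ζ i)) →
      supDistTuple T (regulator T Q ξ) (regulator T Q ζ) ≤ K * supDistTuple T ξ ζ)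
    (m : ℕ) (i : Fin d) : Svec Q m i ≤ K := by
  obtain ⟨m0, hm0⟩ := exists_Dvec_le hQ.2.2.2 (by norm_num : (0:ℝ) < 1/2)
  have h0T : (0:ℝ) ∈ Set.Icc (0:ℝ) T := ⟨le_refl 0, hT.le⟩
  -- the constant 2·Svec m0 is feasible for the constant driver -1
  have hfc : Feasible T Q (fun _ _ => (-1:ℝ)) (fun j _ => 2 * Svec Q m0 j) := by
    apply feasible_const_Svec hT.le hQ.1 (by norm_num)
    intro t ht k
    have := hm0 k
    linarith
  -- bounds on the regulator of the constant -1 driver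
  have hub : ∀ i' : Fin d, ∀ t ∈ Set.Icc (0:ℝ) T,
      regulator T Q (fun _ _ => (-1:ℝ)) i' t ≤ 2 * Svec Q m0 i' :=
    fun i' t ht => regulator_le hfc i' ht
  have hlb : ∀ i' : Fin d, ∀ t ∈ Set.Icc (0:ℝ) T, ∀ m',
      Svec Q m' i' ≤ regulator T Q (fun _ _ => (-1:ℝ)) i' t := by
    intro i' t ht m'
    exact le_regulator ⟨_, hfc⟩ i' t (fun ζ hζ => Svec_le_feasible hQ.1 hζ m' t ht i')
  have hnn : ∀ i' : Fin d, ∀ t ∈ Set.Icc (0:ℝ) T,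
      0 ≤ regulator T Q (fun _ _ => (-1:ℝ)) i' t := by
    intro i' t ht
    have := hlb i' t ht 0
    simpa [Svec] using this
  -- the sup-distance of the two constant drivers is 1
  have hdist : supDistTuple T (fun (_ : Fin d) (_ : ℝ) => (-1:ℝ)) (fun _ _ => (0:ℝ)) = 1 := by
    unfold supDistTuple
    have : {r : ℝ | ∃ i : Fin d, ∃ t ∈ Set.Icc (0:ℝ) T, r = |(-1:ℝ) - 0|} = {1} := by
      ext r
      constructor
      · rintro ⟨i', t, ht, rfl⟩; norm_num
      · rintro rfl
        exact ⟨⟨0, hd⟩, 0, h0T, by norm_num⟩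
    rw [this, csSup_singleton]
  have hLip' := hLip (fun _ _ => (-1:ℝ)) (fun _ _ => (0:ℝ))
    (fun _ => cadlag_of_continuous continuous_const)
    (fun _ => cadlag_of_continuous continuous_const)
  rw [hdist, mul_one] at hLip'
  -- bounded above
  set M : ℝ := Finset.univ.sup' ⟨⟨0, hd⟩, Finset.mem_univ _⟩ (fun j => Svec Q m0 j) with hM
  have hBdd : BddAbove {r : ℝ | ∃ i' : Fin d, ∃ t ∈ Set.Icc (0:ℝ) T,
      r = |regulator T Q (fun _ _ => (-1:ℝ)) i' t - regulator T Q (fun _ _ => (0:ℝ)) i' t|} := by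
    refine ⟨2 * M, ?_⟩
    rintro r ⟨i', t, ht, rfl⟩
    rw [regulator_zero_fn i' ht, sub_zero, abs_of_nonneg (hnn i' t ht)]
    have h1 := hub i' t ht
    have h2 : Svec Q m0 i' ≤ M := Finset.le_sup' _ (Finset.mem_univ i')
    linarith
  have hmem : regulator T Q (fun _ _ => (-1:ℝ)) i 0
      ∈ {r : ℝ | ∃ i' : Fin d, ∃ t ∈ Set.Icc (0:ℝ) T,
      r = |regulator T Q (fun _ _ => (-1:ℝ)) i' t - regulator T Q (fun _ _ => (0:ℝ)) i' t|} := by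
    refine ⟨i, 0, h0T, ?_⟩
    rw [regulator_zero_fn i h0T, sub_zero, abs_of_nonneg (hnn i 0 h0T)]
  calc Svec Q m i ≤ regulator T Q (fun _ _ => (-1:ℝ)) i 0 := hlb i 0 h0T m
    _ ≤ supDistTuple T (regulator T Q (fun _ _ => (-1:ℝ))) (regulator T Q (fun _ _ => (0:ℝ))) :=
        le_csSup hBdd hmem
    _ ≤ K := hLip'

end AuxK

/-- If the regulator map `ψ` is `K`-Lipschitz in the uniform metric, then
for coordinatewise time deformations `w⁽ⁱ⁾` with pointwise min `w̌` and max `ŵ`, and any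
`ξ ∈ ∏ D^{β_i}[0,T]`: (i) `ψ(ξ∘w)(t) ≤ ψ(ξ)(w̌(t)) + 2K‖β‖_∞‖w - e‖_∞` and
(ii) `ψ(ξ)(ŵ(t)) ≤ ψ(ξ∘w)(t) + 2K‖β‖_∞‖w - e‖_∞`, componentwise on `[0,T]`. -/
theorem regulator_multi_time_deformation_bounds
    (T : ℝ) (hT : 0 < T) (d : ℕ) (hd : 0 < d) (β : Fin d → ℝ)
    (Q : Matrix (Fin d) (Fin d) ℝ) (hQ : Substochastic Q)
    (K : ℝ) (hK : 0 < K)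
    (hLip : ∀ ξ ζ : Fin d → ℝ → ℝ, (∀ i, Cadlag T (ξ i)) → (∀ i, Cadlag T (ζ i)) →
      supDistTuple T (regulator T Q ξ) (regulator T Q ζ) ≤ K * supDistTuple T ξ ζ)
    (w : Fin d → ℝ → ℝ) (hw : ∀ i, MonotoneOn (w i) (Set.Icc 0 T))
    (hwmap : ∀ i, Set.MapsTo (w i) (Set.Icc 0 T) (Set.Icc 0 T))
    (hw0 : ∀ i, w i 0 = 0) (hwT : ∀ i, w i T = T)
    (ξ : Fin d → ℝ → ℝ) (hξ : ∀ i, DBeta T (β i) (ξ i))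
    (normβ : ℝ)
    (hnormβ : normβ = Finset.univ.sup' (⟨⟨0, hd⟩, Finset.mem_univ _⟩ :
        (Finset.univ : Finset (Fin d)).Nonempty) fun i => |β i|)
    (wdev : ℝ)
    (hwdev : wdev = Finset.univ.sup' (⟨⟨0, hd⟩, Finset.mem_univ _⟩ :
        (Finset.univ : Finset (Fin d)).Nonempty) fun i => supTimeDev T (w i)) :
    (∀ i, ∀ t ∈ Set.Icc (0:ℝ) T,
      regulator T Q (fun i t => ξ i (w i t)) i t ≤
        regulator T Q ξ i (Finset.univ.inf' (⟨⟨0, hd⟩, Finset.mem_univ _⟩ :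
            (Finset.univ : Finset (Fin d)).Nonempty) (fun j => w j t)) +
          2 * K * normβ * wdev) ∧
    (∀ i, ∀ t ∈ Set.Icc (0:ℝ) T,
      regulator T Q ξ i (Finset.univ.sup' (⟨⟨0, hd⟩, Finset.mem_univ _⟩ :
          (Finset.univ : Finset (Fin d)).Nonempty) (fun j => w j t)) ≤
        regulator T Q (fun i t => ξ i (w i t)) i t + 2 * K * normβ * wdev) := by
  classical
  have hTnn : 0 ≤ T := hT.le
  have nefin : (Finset.univ : Finset (Fin d)).Nonempty := ⟨⟨0, hd⟩, Finset.mem_univ _⟩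
  have h0T : (0:ℝ) ∈ Set.Icc (0:ℝ) T := ⟨le_refl 0, hTnn⟩
  -- the clamp onto [0,T]
  set cl : ℝ → ℝ := fun u => max 0 (min u T) with hcl
  have cl_mono : Monotone cl :=
    Monotone.max monotone_const (Monotone.min monotone_id monotone_const)
  have cl_mem : ∀ u, cl u ∈ Set.Icc (0:ℝ) T := fun u =>
    ⟨le_max_left _ _, max_le hTnn (min_le_right _ _)⟩
  have cl_eq : ∀ s ∈ Set.Icc (0:ℝ) T, cl s = s := by
    intro s hs
    simp only [hcl]
    rw [min_eq_left hs.2, max_eq_right hs.1]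
  have cl_ge : ∀ u, u ≤ T → u ≤ cl u := by
    intro u hu
    simp only [hcl]
    rw [min_eq_left hu]
    exact le_max_right _ _
  -- deviation bounds
  have hstdBdd : ∀ j : Fin d, BddAbove {r : ℝ | ∃ t ∈ Set.Icc (0:ℝ) T, r = |w j t - t|} := by
    intro j
    refine ⟨T, ?_⟩
    rintro r ⟨t, ht', rfl⟩
    have h1 := hwmap j ht'
    exact abs_le.2 ⟨by linarith [h1.1, ht'.2], by linarith [h1.2, ht'.1]⟩
  have hdev : ∀ j : Fin d, ∀ s ∈ Set.Icc (0:ℝ) T, |w j s - s| ≤ wdev := by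
    intro j s hs
    have h1 : |w j s - s| ≤ supTimeDev T (w j) := le_csSup (hstdBdd j) ⟨s, hs, rfl⟩
    have h2 : supTimeDev T (w j) ≤ wdev := by
      rw [hwdev]; exact Finset.le_sup' (fun i => supTimeDev T (w i)) (Finset.mem_univ j)
    linarith
  have hdev1 : ∀ j : Fin d, ∀ s ∈ Set.Icc (0:ℝ) T, w j s ≤ s + wdev := by
    intro j s hs
    have := abs_le.1 (hdev j s hs)
    linarith [this.2]
  have hdev2 : ∀ j : Fin d, ∀ s ∈ Set.Icc (0:ℝ) T, s - wdev ≤ w j s := by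
    intro j s hs
    have := abs_le.1 (hdev j s hs)
    linarith [this.1]
  have wdev0 : 0 ≤ wdev := by
    have h1 : |w ⟨0,hd⟩ 0 - 0| ≤ supTimeDev T (w ⟨0,hd⟩) :=
      le_csSup (hstdBdd ⟨0,hd⟩) ⟨0, h0T, rfl⟩
    have h2 : supTimeDev T (w ⟨0,hd⟩) ≤ wdev := by
      rw [hwdev]; exact Finset.le_sup' (fun i => supTimeDev T (w i)) (Finset.mem_univ _)
    have h3 : (0:ℝ) ≤ |w ⟨0,hd⟩ 0 - 0| := abs_nonneg _
    linarith
  -- norm bounds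
  have hβ : ∀ j : Fin d, |β j| ≤ normβ := by
    intro j
    rw [hnormβ]; exact Finset.le_sup' (fun i => |β i|) (Finset.mem_univ j)
  have normβ0 : 0 ≤ normβ := le_trans (abs_nonneg (β ⟨0,hd⟩)) (hβ _)
  -- one-sided Lipschitz-type bound from DBeta
  have hDB : ∀ j : Fin d, ∀ u v : ℝ, u ∈ Set.Icc (0:ℝ) T → v ∈ Set.Icc (0:ℝ) T → u ≤ v →
      ξ j u ≤ ξ j v + normβ * (v - u) := by
    intro j u v hu hv huv
    have h := (hξ j).2.2 hu hv huv
    dsimp only at h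
    have habs : -β j ≤ |β j| := neg_le_abs _
    have hmul : (-β j) * (v - u) ≤ normβ * (v - u) :=
      mul_le_mul_of_nonneg_right (le_trans habs (hβ j)) (by linarith)
    have hid : ξ j v - β j * v + β j * u = ξ j v + (-β j) * (v - u) := by ring
    linarith
  have hξlb : ∀ j : Fin d, ∀ s ∈ Set.Icc (0:ℝ) T, -(normβ * T) ≤ ξ j s := by
    intro j s hs
    have h1 := hDB j 0 s h0T hs hs.1
    have h2 := (hξ j).2.1
    have h3 : normβ * (s - 0) ≤ normβ * T := mul_le_mul_of_nonneg_left (by linarith [hs.2]) normβ0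
    linarith
  -- selection of truncation indices
  have hms : ∀ n : ℕ, ∃ m, ∀ k, Svec Q (m+1) k - Svec Q m k ≤ 1/((n:ℝ)+2) := by
    intro n
    apply exists_Dvec_le hQ.2.2.2
    positivity
  choose msel hmsel using hms
  have hKS : ∀ m k, Svec Q m k ≤ K := fun m k => Svec_le_K hT hd hQ hLip m k
  -- feasible constants for both drivers
  have hfeas_of_lb : ∀ ξ' : Fin d → ℝ → ℝ,
      (∀ k : Fin d, ∀ s ∈ Set.Icc (0:ℝ) T, -(normβ * T) ≤ ξ' k s) →
      Feasible T Q ξ' (fun j _ => (2*normβ*T) * Svec Q (msel 0) j) := by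
    intro ξ' hlb
    apply feasible_const_Svec hTnn hQ.1 (by positivity)
    intro s hs k
    have hD := hmsel 0 k
    norm_num at hD
    have h2 : (2*normβ*T) * (1 - (Svec Q (msel 0 + 1) k - Svec Q (msel 0) k))
        ≥ (2*normβ*T) * (1/2) := by
      apply mul_le_mul_of_nonneg_left (by linarith) (by positivity)
    have := hlb k s hs
    nlinarith
  have hfeasξ : Feasible T Q ξ (fun j _ => (2*normβ*T) * Svec Q (msel 0) j) :=
    hfeas_of_lb ξ hξlb
  have hfeasξw : Feasible T Q (fun i t => ξ i (w i t))
      (fun j _ => (2*normβ*T) * Svec Q (msel 0) j) := by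
    apply hfeas_of_lb
    intro k s hs
    exact hξlb k (w k s) (hwmap k hs)
  -- the sequence of constants
  set δs : ℕ → ℝ := fun n => 1/((n:ℝ)+1) with hδs
  have hδpos : ∀ n, 0 < δs n := by intro n; simp only [hδs]; positivity
  set Cs : ℕ → ℝ := fun n => normβ * (2*wdev + 2*δs n) with hCs
  have hCs0 : ∀ n, 0 ≤ Cs n := by
    intro n
    simp only [hCs]
    have := (hδpos n).le
    positivity
  have hfrac : ∀ n : ℕ, (0:ℝ) < 1 - 1/((n:ℝ)+2) := by
    intro n
    have h1 : (1:ℝ)/((n:ℝ)+2) ≤ 1/2 := by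
      apply div_le_div_of_nonneg_left (by norm_num) (by norm_num)
      have : (0:ℝ) ≤ (n:ℝ) := Nat.cast_nonneg n
      linarith
    linarith
  set γs : ℕ → ℝ := fun n => Cs n * (1 - 1/((n:ℝ)+2))⁻¹ with hγs
  have hγ0 : ∀ n, 0 ≤ γs n := by
    intro n
    simp only [hγs]
    exact mul_nonneg (hCs0 n) (le_of_lt (inv_pos.2 (hfrac n)))
  have hcsum : ∀ n (j : Fin d),
      Cs n ≤ ∑ k, refMatrix Q j k * (γs n * Svec Q (msel n) k) := by
    intro n j
    rw [sum_refMatrix_Svec]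
    have hD := hmsel n j
    have h1 : γs n * (1 - 1/((n:ℝ)+2))
        ≤ γs n * (1 - (Svec Q (msel n + 1) j - Svec Q (msel n) j)) :=
      mul_le_mul_of_nonneg_left (by linarith) (hγ0 n)
    have h2 : γs n * (1 - 1/((n:ℝ)+2)) = Cs n := by
      simp only [hγs]
      rw [mul_assoc, inv_mul_cancel₀ (ne_of_gt (hfrac n)), mul_one]
    linarith
  have hc0 : ∀ n (j : Fin d), 0 ≤ γs n * Svec Q (msel n) j :=
    fun n j => mul_nonneg (hγ0 n) (Svec_nonneg hQ.1 _ j)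
  have hcK : ∀ n (i : Fin d), γs n * Svec Q (msel n) i ≤ γs n * K :=
    fun n i => mul_le_mul_of_nonneg_left (hKS _ i) (hγ0 n)
  -- the limit of the error terms
  have hrlim : Filter.Tendsto (fun n => γs n * K) Filter.atTop (nhds (2*K*normβ*wdev)) := by
    have h1 : Filter.Tendsto (fun n : ℕ => 1/((n:ℝ)+1)) Filter.atTop (nhds 0) :=
      tendsto_one_div_add_atTop_nhds_zero_nat
    have h2 : Filter.Tendsto (fun n : ℕ => 1/((n:ℝ)+2)) Filter.atTop (nhds 0) := by
      have h3 := h1.comp (Filter.tendsto_add_atTop_nat 1)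
      have h4 : ((fun n : ℕ => 1/((n:ℝ)+1)) ∘ (fun n => n + 1)) = fun n : ℕ => 1/((n:ℝ)+2) := by
        funext n
        simp only [Function.comp]
        push_cast
        ring_nf
      rwa [h4] at h3
    have hmain : Filter.Tendsto
        (fun n : ℕ => normβ * (2*wdev + 2*(1/((n:ℝ)+1))) * ((1 - 1/((n:ℝ)+2))⁻¹ * K))
        Filter.atTop (nhds (normβ * (2*wdev + 2*0) * ((1 - (0:ℝ))⁻¹ * K))) :=
      (tendsto_const_nhds.mul (tendsto_const_nhds.add (h1.const_mul 2))).mul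
        (((tendsto_const_nhds.sub h2).inv₀ (by norm_num)).mul_const K)
    have heq : (fun n : ℕ => γs n * K)
        = fun n : ℕ => normβ * (2*wdev + 2*(1/((n:ℝ)+1))) * ((1 - 1/((n:ℝ)+2))⁻¹ * K) := by
      funext n
      simp only [hγs, hCs, hδs]
      ring
    have hval : normβ * (2*wdev + 2*0) * ((1 - (0:ℝ))⁻¹ * K) = 2*K*normβ*wdev := by
      norm_num
      ring
    rw [heq, ← hval]
    exact hmain
  constructor
  · -- part (i)
    intro i t ht
    set θ : ℝ → ℝ := fun u => Finset.univ.inf' nefin (fun j => w j (cl u)) with hθ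
    have hθmono : Monotone θ := by
      intro u v huv
      apply Finset.le_inf'
      intro j _
      exact le_trans (Finset.inf'_le _ (Finset.mem_univ j))
        (hw j (cl_mem u) (cl_mem v) (cl_mono huv))
    have hθmem : ∀ u, θ u ∈ Set.Icc (0:ℝ) T := by
      intro u
      constructor
      · apply Finset.le_inf'
        intro j _
        exact (hwmap j (cl_mem u)).1
      · exact le_trans (Finset.inf'_le _ (Finset.mem_univ ⟨0,hd⟩)) (hwmap _ (cl_mem u)).2
    have key : ∀ n : ℕ, regulator T Q (fun i t => ξ i (w i t)) i t
        ≤ regulator T Q ξ i (θ t) + γs n * K := by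
      intro n
      have hest : ∀ s ∈ Set.Icc (0:ℝ) T, ∀ u ∈ Set.Icc (s - δs n) s, ∀ j,
          ξ j (θ u) ≤ ξ j (w j s) + Cs n := by
        intro s hs u hu j
        have hclus : cl u ≤ s := by
          rw [← cl_eq s hs]
          exact cl_mono hu.2
        have h1 : θ u ≤ w j s :=
          le_trans (Finset.inf'_le _ (Finset.mem_univ j)) (hw j (cl_mem u) hs hclus)
        have h3 := hDB j (θ u) (w j s) (hθmem u) (hwmap j hs) h1
        have h4 : w j s ≤ s + wdev := hdev1 j s hs
        have hclu : s - δs n ≤ cl u := le_trans hu.1 (cl_ge u (le_trans hu.2 hs.2))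
        have h5 : s - δs n - wdev ≤ θ u := by
          apply Finset.le_inf'
          intro k _
          have := hdev2 k (cl u) (cl_mem u)
          linarith
        have h6 : normβ * (w j s - θ u) ≤ Cs n := by
          have hle : w j s - θ u ≤ 2*wdev + 2*δs n := by
            have := (hδpos n).le
            linarith
          have := mul_le_mul_of_nonneg_left hle normβ0
          simp only [hCs]
          linarith
        linarith
      have hζbound : ∀ ζ : Fin d → ℝ → ℝ, Feasible T Q ξ ζ →
          regulator T Q (fun i t => ξ i (w i t)) i t ≤ ζ i (θ t) + γs n * K := by
        intro ζ hζ
        have hfeas' := construct_feasible (ξtgt := fun j s => ξ j (w j s))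
          (c := fun k => γs n * Svec Q (msel n) k)
          hTnn hζ hθmono hθmem (hδpos n) hest (hc0 n) (hcsum n)
        have h7 := regulator_le hfeas' i ht
        have h8 := construct_value_le hζ hθmono hθmem (hδpos n)
          (fun k => γs n * Svec Q (msel n) k) i t
        have h9 := hcK n i
        linarith
      have h10 : regulator T Q (fun i t => ξ i (w i t)) i t - γs n * K
          ≤ regulator T Q ξ i (θ t) := by
        apply le_regulator ⟨_, hfeasξ⟩ i (θ t)
        intro ζ hζ
        have := hζbound ζ hζ
        linarith
      linarith
    have hfinal : regulator T Q (fun i t => ξ i (w i t)) i t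
        ≤ regulator T Q ξ i (θ t) + 2*K*normβ*wdev := by
      apply ge_of_tendsto' (tendsto_const_nhds.add hrlim)
      intro n
      exact key n
    have hθt : θ t = Finset.univ.inf' nefin (fun j => w j t) := by
      simp only [hθ]
      rw [cl_eq t ht]
    rw [hθt] at hfinal
    exact hfinal
  · -- part (ii)
    intro i t ht
    set what : ℝ → ℝ := fun u => Finset.univ.sup' nefin (fun j => w j (cl u)) with hwhat
    have whatmem : ∀ u, what u ∈ Set.Icc (0:ℝ) T := by
      intro u
      constructor
      · exact le_trans (hwmap ⟨0,hd⟩ (cl_mem u)).1 (Finset.le_sup' (fun j => w j (cl u)) (Finset.mem_univ ⟨0,hd⟩))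
      · apply Finset.sup'_le
        intro j _
        exact (hwmap j (cl_mem u)).2
    have whatT : what T = T := by
      simp only [hwhat]
      rw [cl_eq T ⟨hTnn, le_refl T⟩]
      apply le_antisymm
      · apply Finset.sup'_le
        intro j _
        rw [hwT j]
      · calc T = w ⟨0,hd⟩ T := (hwT _).symm
          _ ≤ _ := Finset.le_sup' (fun j => w j T) (Finset.mem_univ _)
    set v : ℝ → ℝ := fun r => sInf {s : ℝ | s ∈ Set.Icc (0:ℝ) T ∧ cl r ≤ what s} with hv
    have hvne : ∀ r, {s : ℝ | s ∈ Set.Icc (0:ℝ) T ∧ cl r ≤ what s}.Nonempty := by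
      intro r
      refine ⟨T, ⟨hTnn, le_refl T⟩, ?_⟩
      rw [whatT]
      exact (cl_mem r).2
    have hvbdd : ∀ r, BddBelow {s : ℝ | s ∈ Set.Icc (0:ℝ) T ∧ cl r ≤ what s} :=
      fun r => ⟨0, fun s hs => hs.1.1⟩
    have vmem : ∀ r, v r ∈ Set.Icc (0:ℝ) T := by
      intro r
      simp only [hv]
      constructor
      · apply le_csInf (hvne r)
        rintro s ⟨hs1, -⟩
        exact hs1.1
      · apply csInf_le (hvbdd r)
        refine ⟨⟨hTnn, le_refl T⟩, ?_⟩
        rw [whatT]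
        exact (cl_mem r).2
    have vmono : Monotone v := by
      intro r r' hrr
      simp only [hv]
      apply csInf_le_csInf (hvbdd r) (hvne r')
      rintro s ⟨hs1, hs2⟩
      exact ⟨hs1, le_trans (cl_mono hrr) hs2⟩
    have v_lt : ∀ r p, p ∈ Set.Icc (0:ℝ) T → p < v r → what p < cl r := by
      intro r p hp hlt
      by_contra hcon
      push_neg at hcon
      have hvp : v r ≤ p := by
        simp only [hv]
        exact csInf_le (hvbdd r) ⟨hp, hcon⟩
      linarith
    have v_lb : ∀ r, cl r - wdev ≤ v r := by
      intro r
      simp only [hv]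
      apply le_csInf (hvne r)
      intro s hs
      have h1 : what s ≤ s + wdev := by
        simp only [hwhat]
        rw [cl_eq s hs.1]
        apply Finset.sup'_le
        intro j _
        exact hdev1 j s hs.1
      have := hs.2
      linarith
    have hwt_mem : what t ∈ Set.Icc (0:ℝ) T := whatmem t
    have key : ∀ n : ℕ, regulator T Q ξ i (what t)
        ≤ regulator T Q (fun i t => ξ i (w i t)) i t + γs n * K := by
      intro n
      set θ : ℝ → ℝ := fun u => max 0 (v u - δs n) with hθ
      have hθmono : Monotone θ := by
        intro u u' h
        exact max_le_max (le_refl 0) (sub_le_sub_right (vmono h) _)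
      have hθmem : ∀ u, θ u ∈ Set.Icc (0:ℝ) T := by
        intro u
        refine ⟨le_max_left _ _, max_le hTnn ?_⟩
        have h1 := (vmem u).2
        have h2 := (hδpos n).le
        linarith
      have hest : ∀ s ∈ Set.Icc (0:ℝ) T, ∀ u ∈ Set.Icc (s - δs n) s, ∀ j,
          ξ j (w j (θ u)) ≤ ξ j s + Cs n := by
        intro s hs u hu j
        have hδ := (hδpos n).le
        have hclu_ge : s - δs n ≤ cl u := le_trans hu.1 (cl_ge u (le_trans hu.2 hs.2))
        have hclu_le : cl u ≤ s := by rw [← cl_eq s hs]; exact cl_mono hu.2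
        have hwm : w j (θ u) ∈ Set.Icc (0:ℝ) T := hwmap j (hθmem u)
        have hA : w j (θ u) ≤ s ∧ s - (2*wdev + 2*δs n) ≤ w j (θ u) := by
          rcases le_or_gt (v u - δs n) 0 with hcase | hcase
          · have hθ0 : θ u = 0 := by
              simp only [hθ]
              exact max_eq_left (by linarith)
            rw [hθ0, hw0 j]
            have h1 := v_lb u
            constructor
            · exact hs.1
            · have h2 : cl u ≤ δs n + wdev := by linarith
              linarith
          · have hθeq : θ u = v u - δs n := by
              simp only [hθ]
              exact max_eq_right (by linarith)
            have hpmem : θ u ∈ Set.Icc (0:ℝ) T := hθmem u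
            have hplt : θ u < v u := by rw [hθeq]; linarith [hδpos n]
            have hwlt : what (θ u) < cl u := v_lt u (θ u) hpmem hplt
            have hwle : w j (θ u) ≤ what (θ u) := by
              simp only [hwhat]
              rw [cl_eq (θ u) hpmem]
              exact Finset.le_sup' (fun k => w k (θ u)) (Finset.mem_univ j)
            constructor
            · linarith
            · have h1 := hdev2 j (θ u) hpmem
              have h2 := v_lb u
              linarith [hθeq]
        have h3 := hDB j (w j (θ u)) s hwm hs hA.1
        have h6 : normβ * (s - w j (θ u)) ≤ Cs n := by
          have hle : s - w j (θ u) ≤ 2*wdev + 2*δs n := by linarith [hA.2]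
          have := mul_le_mul_of_nonneg_left hle normβ0
          simp only [hCs]
          linarith
        linarith
      have hζbound : ∀ ζ : Fin d → ℝ → ℝ, Feasible T Q (fun i t => ξ i (w i t)) ζ →
          regulator T Q ξ i (what t) ≤ ζ i t + γs n * K := by
        intro ζ hζ
        have hfeas' := construct_feasible (ξtgt := ξ)
          (c := fun k => γs n * Svec Q (msel n) k)
          hTnn hζ hθmono hθmem (hδpos n) hest (hc0 n) (hcsum n)
        have h7 := regulator_le hfeas' i hwt_mem
        have h8 := construct_value_le hζ hθmono hθmem (hδpos n)
          (fun k => γs n * Svec Q (msel n) k) i (what t)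
        have hθwt_le : θ (what t) ≤ t := by
          apply max_le ht.1
          have hvle : v (what t) ≤ t := by
            simp only [hv]
            apply csInf_le (hvbdd _)
            refine ⟨ht, ?_⟩
            rw [cl_eq (what t) hwt_mem]
          linarith [(hδpos n).le]
        have hmono := (hζ.1 i).2.1 (hθmem (what t)) ht hθwt_le
        have h9 := hcK n i
        linarith
      have h10 : regulator T Q ξ i (what t) - γs n * K
          ≤ regulator T Q (fun i t => ξ i (w i t)) i t := by
        apply le_regulator ⟨_, hfeasξw⟩ i t
        intro ζ hζ
        have := hζbound ζ hζ
        linarith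
      linarith
    have hfinal : regulator T Q ξ i (what t)
        ≤ regulator T Q (fun i t => ξ i (w i t)) i t + 2*K*normβ*wdev := by
      apply ge_of_tendsto' (tendsto_const_nhds.add hrlim)
      intro n
      exact key n
    have hwt : what t = Finset.univ.sup' nefin (fun j => w j t) := by
      simp only [hwhat]
      rw [cl_eq t ht]
    rw [hwt] at hfinal
    exact hfinal
end
end

section
/- (Extended contraction principle for Lipschitz maps.) Let (𝕏, d) and (𝕊, σ) be metric spaces, Φ : 𝕏 → 𝕊 a Lipschitz continuous map, (μ_n) a sequence of Borel probability measures on 𝕏, (a_n) positive reals tending to infinity, and I : 𝕏 → [0,∞]. Assume (μ_n) satisfies the extended large deviation bounds in 𝕏 with speed a_n and rate I. Define I'(y) = inf{ I(x) : x ∈ 𝕏, Φ(x) = y } for y ∈ 𝕊, and let ν_n = μ_n ∘ Φ⁻¹ be the pushforward measures on 𝕊. Then: for every open set G ⊆ 𝕊, liminf_n (1/a_n) log ν_n(G) ≥ −inf_{y∈G} I'(y); and for every closed set F ⊆ 𝕊, limsup_n (1/a_n) log ν_n(F) ≤ −sup_{ε>0} inf_{y∈F^ε} I'(y). -/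
open Set Filter MeasureTheory Metric ENNReal

noncomputable section

/-- The normalized log-probability `a_n⁻¹ · log μ_n(A)` (with `log 0 = -∞`), as an `EReal`. -/
def logProbRate (a : ℕ → ℝ) (p : ℕ → ℝ≥0∞) : ℕ → EReal :=
  fun n => (((a n)⁻¹ : ℝ) : EReal) * ENNReal.log (p n)

/-- The extended-LDP lower bound: for every open `G`,
`liminf a_n⁻¹ log μ_n(G) ≥ - inf_{x ∈ G} I(x)`. -/
def ExtLDPLowerBound {X : Type*} [MetricSpace X] [MeasurableSpace X]
    (μ : ℕ → Measure X) (a : ℕ → ℝ) (I : X → ℝ≥0∞) : Prop :=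
  ∀ G : Set X, IsOpen G →
    -(⨅ x ∈ G, (I x : EReal)) ≤
      Filter.liminf (logProbRate a (fun n => μ n G)) Filter.atTop

/-- The extended-LDP upper bound: for every closed `F`,
`limsup a_n⁻¹ log μ_n(F) ≤ - sup_{ε > 0} inf_{x ∈ F^ε} I(x)`,
where `F^ε` is the closed `ε`-thickening of `F`. -/
def ExtLDPUpperBound {X : Type*} [MetricSpace X] [MeasurableSpace X]
    (μ : ℕ → Measure X) (a : ℕ → ℝ) (I : X → ℝ≥0∞) : Prop :=
  ∀ F : Set X, IsClosed F →
    Filter.limsup (logProbRate a (fun n => μ n F)) Filter.atTop ≤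
      -(⨆ (ε : ℝ) (_ : 0 < ε), ⨅ x ∈ Metric.cthickening ε F, (I x : EReal))

/-- The pushforward rate function `I'(y) = inf { I(x) : Φ(x) = y }` (equal to `+∞` when the
preimage of `y` is empty). -/
def pushRate {X S : Type*} (Φ : X → S) (I : X → ℝ≥0∞) : S → ℝ≥0∞ :=
  fun y => ⨅ (x : X) (_ : Φ x = y), I x


/-- Coercion `ℝ≥0∞ → EReal` commutes with infima. -/
lemma my_coe_ennreal_iInf {ι : Sort*} (f : ι → ℝ≥0∞) :
    ((⨅ i, f i : ℝ≥0∞) : EReal) = ⨅ i, (f i : EReal) :=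
  Monotone.map_iInf_of_continuousAt (continuous_coe_ennreal_ereal.continuousAt)
    EReal.coe_ennreal_strictMono.monotone EReal.coe_ennreal_top

/-- A Lipschitz map sends the `ε/L`-cthickening of the preimage of `F` into the
`ε`-cthickening of `F`. -/
lemma my_lipschitz_cthickening_preimage {X S : Type*} [MetricSpace X] [MetricSpace S]
    (L' : NNReal) (hL'0 : (0:ℝ) < (L':ℝ)) (Φ : X → S) (hΦ' : LipschitzWith L' Φ)
    (F : Set S) {ε : ℝ} {x : X}
    (hx : x ∈ Metric.cthickening (ε / (L':ℝ)) (Φ ⁻¹' F)) :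
    Φ x ∈ Metric.cthickening ε F := by
  have hL'ne : L' ≠ 0 := by exact_mod_cast hL'0.ne'
  rw [Metric.mem_cthickening_iff] at hx ⊢
  refine ENNReal.le_of_forall_pos_le_add fun η hη _ => ?_
  set η' : NNReal := η / L' with hη'def
  have hη' : η' ≠ 0 := by
    simp [hη'def, _root_.div_eq_zero_iff, hL'ne, hη.ne']
  have hlt : EMetric.infEdist x (Φ ⁻¹' F) < ENNReal.ofReal (ε / (L':ℝ)) + η' :=
    lt_of_le_of_lt hx (ENNReal.lt_add_right ENNReal.ofReal_ne_top (by exact_mod_cast hη'))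
  obtain ⟨z, hzF, hz⟩ := EMetric.infEdist_lt_iff.mp hlt
  calc EMetric.infEdist (Φ x) F ≤ edist (Φ x) (Φ z) := EMetric.infEdist_le_edist_of_mem hzF
    _ ≤ ↑L' * edist x z := hΦ'.edist_le_mul x z
    _ ≤ ↑L' * (ENNReal.ofReal (ε / (L':ℝ)) + η') := mul_le_mul_right hz.le _
    _ = ENNReal.ofReal ε + η := by
        rw [mul_add]
        congr 1
        · rw [← ENNReal.ofReal_coe_nnreal, ← ENNReal.ofReal_mul (by positivity),
            mul_div_cancel₀ _ hL'0.ne']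
        · rw [← ENNReal.coe_mul, hη'def, mul_div_cancel₀ _ hL'ne]

/-- (Extended contraction principle for Lipschitz maps.) If `(μ_n)` satisfies
the extended LDP bounds in `𝕏` with speed `a_n` and rate `I`, and `Φ : 𝕏 → 𝕊` is Lipschitz,
then the pushforward measures `ν_n = μ_n ∘ Φ⁻¹` satisfy the extended LDP bounds in `𝕊` with
speed `a_n` and rate `I'(y) = inf{I(x) : Φ(x) = y}`. -/
theorem extended_contraction_principle
    {X S : Type*} [MetricSpace X] [MeasurableSpace X] [BorelSpace X]
    [MetricSpace S] [MeasurableSpace S] [BorelSpace S]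
    (Φ : X → S) (L : NNReal) (hΦ : LipschitzWith L Φ)
    (μ : ℕ → Measure X) (hprob : ∀ n, IsProbabilityMeasure (μ n))
    (a : ℕ → ℝ) (ha : ∀ n, 0 < a n) (ha' : Filter.Tendsto a Filter.atTop Filter.atTop)
    (I : X → ℝ≥0∞)
    (hlow : ExtLDPLowerBound μ a I) (hup : ExtLDPUpperBound μ a I) :
    ExtLDPLowerBound (fun n => (μ n).map Φ) a (pushRate Φ I) ∧
    ExtLDPUpperBound (fun n => (μ n).map Φ) a (pushRate Φ I) := by
  have hΦm : Measurable Φ := hΦ.continuous.measurable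
  set L' : NNReal := max L 1 with hL'def
  have hΦ' : LipschitzWith L' Φ := hΦ.weaken (le_max_left _ _)
  have hL'0 : (0:ℝ) < (L':ℝ) := lt_of_lt_of_le one_pos (by exact_mod_cast le_max_right L 1)
  constructor
  · intro G hG
    have heq : logProbRate a (fun n => ((μ n).map Φ) G)
        = logProbRate a (fun n => μ n (Φ ⁻¹' G)) := by
      funext n
      simp [logProbRate, Measure.map_apply hΦm hG.measurableSet]
    rw [heq]
    refine le_trans ?_ (hlow (Φ ⁻¹' G) (hG.preimage hΦ.continuous))
    rw [EReal.neg_le_neg_iff]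
    refine le_iInf₂ fun y hy => ?_
    rw [pushRate, my_coe_ennreal_iInf]
    refine le_iInf fun x => ?_
    rw [my_coe_ennreal_iInf]
    refine le_iInf fun hx => ?_
    exact iInf₂_le x (by simp only [Set.mem_preimage, hx]; exact hy)
  · intro F hF
    have heq : logProbRate a (fun n => ((μ n).map Φ) F)
        = logProbRate a (fun n => μ n (Φ ⁻¹' F)) := by
      funext n
      simp [logProbRate, Measure.map_apply hΦm hF.measurableSet]
    rw [heq]
    refine le_trans (hup (Φ ⁻¹' F) (hF.preimage hΦ.continuous)) ?_
    rw [EReal.neg_le_neg_iff]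
    refine iSup₂_le fun ε hε => ?_
    refine le_iSup₂_of_le (ε / (L':ℝ)) (div_pos hε hL'0) ?_
    refine le_iInf₂ fun x hx => ?_
    have hx' : Φ x ∈ Metric.cthickening ε F :=
      my_lipschitz_cthickening_preimage L' hL'0 Φ hΦ' F hx
    calc (⨅ y ∈ Metric.cthickening ε F, (pushRate Φ I y : EReal))
        ≤ (pushRate Φ I (Φ x) : EReal) := iInf₂_le _ hx'
      _ ≤ (I x : EReal) :=
          EReal.coe_ennreal_le_coe_ennreal_iff.2 (show pushRate Φ I (Φ x) ≤ I x from iInf_le_of_le x (iInf_le _ rfl))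
end
end

section
/- Let (𝕏, d) and (𝕊, σ) be metric spaces and Φ : 𝕏 → 𝕊 a Lipschitz continuous map which is also a homeomorphism of 𝕏 onto 𝕊. Let (μ_n) be Borel probability measures on 𝕏, (a_n) positive reals tending to infinity, and I : 𝕏 → [0,∞] lower semicontinuous. Assume (μ_n) satisfies the extended large deviation bounds in 𝕏 with speed a_n and rate I. Define I'(y) = inf{ I(x) : Φ(x) = y } = I(Φ⁻¹(y)) and ν_n = μ_n ∘ Φ⁻¹. Then I' is lower semicontinuous on 𝕊 (its sublevel sets {y : I'(y) ≤ M} = Φ({x : I(x) ≤ M}) are closed for every M ≥ 0), and (ν_n) satisfies the extended large deviation bounds in 𝕊 with speed a_n and rate I'. -/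
open Set Filter MeasureTheory Metric ENNReal

noncomputable section

/-- If `Φ` is a Lipschitz homeomorphism and `(μ_n)` satisfies the extended
LDP bounds in `𝕏` with speed `a_n` and lower semicontinuous rate `I`, then
`I'(y) = inf{I(x) : Φ(x) = y}` is lower semicontinuous (equivalently, its sublevel sets
`Φ({I ≤ M})` are closed) and the pushforward measures `ν_n = μ_n ∘ Φ⁻¹` satisfy the extended
LDP bounds in `𝕊` with speed `a_n` and rate `I'`. -/
theorem extended_contraction_principle_homeomorph
    {X S : Type*} [MetricSpace X] [MeasurableSpace X] [BorelSpace X]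
    [MetricSpace S] [MeasurableSpace S] [BorelSpace S]
    (Φ : X → S) (L : NNReal) (hΦ : LipschitzWith L Φ) (hhom : IsHomeomorph Φ)
    (μ : ℕ → Measure X) (hprob : ∀ n, IsProbabilityMeasure (μ n))
    (a : ℕ → ℝ) (ha : ∀ n, 0 < a n) (ha' : Filter.Tendsto a Filter.atTop Filter.atTop)
    (I : X → ℝ≥0∞) (hI : LowerSemicontinuous I)
    (hlow : ExtLDPLowerBound μ a I) (hup : ExtLDPUpperBound μ a I) :
    LowerSemicontinuous (pushRate Φ I) ∧
    (∀ M : ℝ≥0∞, {y : S | pushRate Φ I y ≤ M} = Φ '' {x : X | I x ≤ M} ∧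
      IsClosed {y : S | pushRate Φ I y ≤ M}) ∧
    ExtLDPLowerBound (fun n => (μ n).map Φ) a (pushRate Φ I) ∧
    ExtLDPUpperBound (fun n => (μ n).map Φ) a (pushRate Φ I) := by
  classical
  set e := hhom.homeomorph Φ with he
  have heapp : ∀ x, e x = Φ x := fun x => rfl
  have hsymm : ∀ y, Φ (e.symm y) = y := fun y => e.apply_symm_apply y
  have hsymm' : ∀ x, e.symm (Φ x) = x := fun x => e.symm_apply_apply x
  have hpush : ∀ y, pushRate Φ I y = I (e.symm y) := by
    intro y
    apply le_antisymm
    · exact iInf₂_le (e.symm y) (hsymm y)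
    · refine le_iInf₂ fun x hx => le_of_eq ?_
      rw [← hx, hsymm' x]
  have hpushΦ : ∀ x, pushRate Φ I (Φ x) = I x := by
    intro x; rw [hpush, hsymm']
  have hlsc : LowerSemicontinuous (pushRate Φ I) := by
    have : pushRate Φ I = fun y => I (e.symm y) := funext hpush
    rw [this]
    exact LowerSemicontinuous.comp hI e.symm.continuous
  have hcont : Continuous Φ := hhom.continuous
  have hmeasΦ : Measurable Φ := hcont.measurable
  -- Lipschitz constant bounded below by 1
  set K : NNReal := max L 1 with hK
  have hΦK : LipschitzWith K Φ := hΦ.weaken (le_max_left _ _)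
  have hKpos : (0:ℝ) < (K:ℝ) := lt_of_lt_of_le one_pos (by exact_mod_cast le_max_right L 1)
  have hK0 : (K : ℝ≥0∞) ≠ 0 := by
    simp only [ne_eq, ENNReal.coe_eq_zero]
    exact fun h => by simp [h] at hKpos
  refine ⟨hlsc, ?_, ?_, ?_⟩
  · -- sublevel sets
    intro M
    have hset : {y : S | pushRate Φ I y ≤ M} = Φ '' {x : X | I x ≤ M} := by
      ext y
      simp only [mem_setOf_eq, mem_image, hpush]
      constructor
      · intro h; exact ⟨e.symm y, h, hsymm y⟩
      · rintro ⟨x, hx, rfl⟩; rwa [hsymm']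
    exact ⟨hset, hlsc.isClosed_preimage M⟩
  · -- lower bound
    intro G hG
    have hG' : IsOpen (Φ ⁻¹' G) := hG.preimage hcont
    have hmeas : (fun n => ((μ n).map Φ) G) = fun n => μ n (Φ ⁻¹' G) :=
      funext fun n => Measure.map_apply hmeasΦ hG.measurableSet
    have hinf : (⨅ y ∈ G, (pushRate Φ I y : EReal)) = ⨅ x ∈ Φ ⁻¹' G, (I x : EReal) := by
      apply le_antisymm
      · refine le_iInf₂ fun x hx => ?_
        refine (iInf₂_le (Φ x) hx).trans (le_of_eq ?_)
        rw [hpushΦ]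
      · refine le_iInf₂ fun y hy => ?_
        refine (iInf₂_le (e.symm y) (by simpa [mem_preimage, hsymm y] using hy)).trans
          (le_of_eq ?_)
        rw [hpush]
    rw [hmeas, hinf]
    exact hlow _ hG'
  · -- upper bound
    intro F hF
    have hF' : IsClosed (Φ ⁻¹' F) := hF.preimage hcont
    have hmeas : (fun n => ((μ n).map Φ) F) = fun n => μ n (Φ ⁻¹' F) :=
      funext fun n => Measure.map_apply hmeasΦ hF.measurableSet
    rw [hmeas]
    refine (hup _ hF').trans ?_
    rw [EReal.neg_le_neg_iff]
    -- key inclusion: Φ maps cthickening ε (Φ⁻¹ F) into cthickening (K ε) F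
    have hincl : ∀ ε : ℝ, ∀ x ∈ Metric.cthickening ε (Φ ⁻¹' F),
        Φ x ∈ Metric.cthickening ((K:ℝ) * ε) F := by
      intro ε x hx
      rw [Metric.mem_cthickening_iff] at hx ⊢
      have himg : Φ '' (Φ ⁻¹' F) = F := Set.image_preimage_eq F hhom.surjective
      have hle0 : ∀ t : Set X,
          EMetric.infEdist (Φ x) (Φ '' t) ≤ (K : ℝ≥0∞) * EMetric.infEdist x t := by
        intro t
        conv_rhs => rw [EMetric.infEdist, Metric.infEDist]
        rw [ENNReal.mul_iInf_of_ne hK0 ENNReal.coe_ne_top]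
        refine le_iInf fun z => ?_
        rw [ENNReal.mul_iInf_of_ne hK0 ENNReal.coe_ne_top]
        refine le_iInf fun hz => ?_
        exact (EMetric.infEdist_le_edist_of_mem (Set.mem_image_of_mem _ hz)).trans
          (hΦK.edist_le_mul x z)
      have hle := hle0 (Φ ⁻¹' F)
      rw [himg] at hle
      refine hle.trans ?_
      calc (K : ℝ≥0∞) * EMetric.infEdist x (Φ ⁻¹' F)
          ≤ (K : ℝ≥0∞) * ENNReal.ofReal ε := by gcongr; exact hx
        _ = ENNReal.ofReal ((K:ℝ) * ε) := by
            rw [ENNReal.ofReal_mul hKpos.le, ENNReal.ofReal_coe_nnreal]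
    refine iSup₂_le fun δ hδ => ?_
    refine le_iSup₂_of_le (δ / (K:ℝ)) (div_pos hδ hKpos) ?_
    refine le_iInf₂ fun x hx => ?_
    have hx' : Φ x ∈ Metric.cthickening δ F := by
      have := hincl (δ / (K:ℝ)) x hx
      rwa [mul_div_cancel₀ δ hKpos.ne'] at this
    refine (iInf₂_le (Φ x) hx').trans (le_of_eq ?_)
    rw [hpushΦ]
end
end

section
/- (Tandem optimization: extreme-point evaluation.) Let α ∈ (0,1), c₁ > 0, c₂ > 0, k > 0, M > 0 and y > 0. Consider the set S = {(x₁, x₂) ∈ ℝ² : x₂ + k x₁ = y, 0 ≤ x₁ ≤ M, x₂ ≥ 0}. Then the infimum of c₁x₁^α + c₂x₂^α over S is attained and equals: min( c₂ y^α, c₁ (y/k)^α ) if y ≤ kM, and min( c₂ y^α, c₁ M^α + c₂ (y − kM)^α ) if y > kM. -/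
open Set Real

lemma tandem_concave (α c₁ c₂ k y B : ℝ) (hα : 0 < α) (hα1 : α < 1)
    (hc₁ : 0 ≤ c₁) (hc₂ : 0 ≤ c₂) (hk : 0 < k) (hBy : k * B ≤ y) :
    ConcaveOn ℝ (Set.Icc (0:ℝ) B) (fun t => c₁ * t ^ α + c₂ * (y - k * t) ^ α) := by
  refine ⟨convex_Icc _ _, fun x hx z hz a b ha hb hab => ?_⟩
  have hcon := Real.concaveOn_rpow hα.le hα1.le
  have h1 := hcon.2 (Set.mem_Ici.2 hx.1) (Set.mem_Ici.2 hz.1) ha hb hab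
  have hx2 : (0:ℝ) ≤ y - k * x := by nlinarith [hx.2, hk.le]
  have hz2 : (0:ℝ) ≤ y - k * z := by nlinarith [hz.2, hk.le]
  have h2 := hcon.2 (Set.mem_Ici.2 hx2) (Set.mem_Ici.2 hz2) ha hb hab
  simp only [smul_eq_mul] at h1 h2 ⊢
  have he : a * (y - k * x) + b * (y - k * z) = y - k * (a * x + b * z) := by linear_combination y * hab
  rw [he] at h2
  nlinarith [mul_le_mul_of_nonneg_left h1 hc₁, mul_le_mul_of_nonneg_left h2 hc₂]

/-- (Tandem optimization: extreme-point evaluation.) The infimum of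
`c₁x₁^α + c₂x₂^α` over the segment `{x₂ + k x₁ = y, 0 ≤ x₁ ≤ M, x₂ ≥ 0}` is attained and
equals `min(c₂ y^α, c₁ (y/k)^α)` if `y ≤ kM`, and
`min(c₂ y^α, c₁ M^α + c₂ (y - kM)^α)` if `y > kM`. -/
theorem tandem_extreme_point_minimum
    (α c₁ c₂ k M y : ℝ) (hα : α ∈ Set.Ioo (0:ℝ) 1)
    (hc₁ : 0 < c₁) (hc₂ : 0 < c₂) (hk : 0 < k) (hM : 0 < M) (hy : 0 < y) :
    IsLeast {r : ℝ | ∃ x₁ x₂ : ℝ, x₂ + k * x₁ = y ∧ 0 ≤ x₁ ∧ x₁ ≤ M ∧ 0 ≤ x₂ ∧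
        r = c₁ * x₁ ^ α + c₂ * x₂ ^ α}
      (if y ≤ k * M then min (c₂ * y ^ α) (c₁ * (y / k) ^ α)
       else min (c₂ * y ^ α) (c₁ * M ^ α + c₂ * (y - k * M) ^ α)) := by
  obtain ⟨hα0, hα1⟩ := hα
  have hzα : (0:ℝ) ^ α = 0 := Real.zero_rpow (ne_of_gt hα0)
  set B : ℝ := min M (y / k) with hB
  have hB0 : 0 < B := lt_min hM (div_pos hy hk)
  have hBM : B ≤ M := min_le_left _ _
  have hBy : k * B ≤ y := by
    have := min_le_right M (y / k)
    calc k * B ≤ k * (y / k) := by nlinarith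
    _ = y := by field_simp
  set f : ℝ → ℝ := fun t => c₁ * t ^ α + c₂ * (y - k * t) ^ α with hf
  have hconc := tandem_concave α c₁ c₂ k y B hα0 hα1 hc₁.le hc₂.le hk hBy
  have hf0 : f 0 = c₂ * y ^ α := by simp [hf, hzα]
  have hfB : f B = if y ≤ k * M then c₁ * (y / k) ^ α
      else c₁ * M ^ α + c₂ * (y - k * M) ^ α := by
    by_cases hcase : y ≤ k * M
    · have hBval : B = y / k := by
        rw [hB, min_eq_right]
        rw [div_le_iff₀ hk]; linarith
      simp only [hcase, if_true, hf, hBval]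
      have : y - k * (y / k) = 0 := by field_simp; ring
      rw [this, hzα]; ring
    · have hBval : B = M := by
        rw [hB, min_eq_left]
        rw [le_div_iff₀ hk]; nlinarith [not_le.1 hcase]
      simp [hcase, hf, hBval]
  have hlow : ∀ r ∈ {r : ℝ | ∃ x₁ x₂ : ℝ, x₂ + k * x₁ = y ∧ 0 ≤ x₁ ∧ x₁ ≤ M ∧ 0 ≤ x₂ ∧
      r = c₁ * x₁ ^ α + c₂ * x₂ ^ α}, min (f 0) (f B) ≤ r := by
    rintro r ⟨x₁, x₂, heq, hx1, hxM, hx2, hr⟩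
    have hx1B : x₁ ≤ B := by
      refine le_min hxM ?_
      rw [le_div_iff₀ hk]; nlinarith
    have hmem : x₁ ∈ segment ℝ (0:ℝ) B := by
      rw [segment_eq_Icc hB0.le]; exact ⟨hx1, hx1B⟩
    have := hconc.ge_on_segment (Set.left_mem_Icc.2 hB0.le) (Set.right_mem_Icc.2 hB0.le) hmem
    have hx2eq : x₂ = y - k * x₁ := by linarith
    rw [hr, hx2eq]
    exact this
  constructor
  · by_cases hcase : y ≤ k * M
    · simp only [hcase, if_true]
      rcases le_total (c₂ * y ^ α) (c₁ * (y / k) ^ α) with h | h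
      · rw [min_eq_left h]
        exact ⟨0, y, by ring, le_rfl, hM.le, hy.le, by rw [hzα]; ring⟩
      · rw [min_eq_right h]
        refine ⟨y / k, 0, by field_simp; ring, by positivity, ?_, le_rfl, by rw [hzα]; ring⟩
        rw [div_le_iff₀ hk]; linarith
    · simp only [hcase, if_false]
      have hyM : k * M < y := by nlinarith [not_le.1 hcase]
      rcases le_total (c₂ * y ^ α) (c₁ * M ^ α + c₂ * (y - k * M) ^ α) with h | h
      · rw [min_eq_left h]
        exact ⟨0, y, by ring, le_rfl, hM.le, hy.le, by rw [hzα]; ring⟩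
      · rw [min_eq_right h]
        exact ⟨M, y - k * M, by ring, hM.le, le_rfl, by linarith, rfl⟩
  · intro r hr
    have := hlow r hr
    rw [hf0, hfB] at this
    by_cases hcase : y ≤ k * M <;> simp only [hcase, if_true, if_false] at this ⊢ <;> exact this
end
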